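/- Let F : ℝⁿ → ℝᵐ be continuously differentiable with Jacobian DF Lipschitz continuous with constant c₃, and let c₁ ∈ (0,1). Let A ∈ ℝ^{m×n}, w, s ∈ ℝⁿ with s the step, σ ∈ ℝᵐ with σ ≠ 0, and define y = F(w + s) − F(w), γ = DF(w + s)ᵀσ, ρ = y − A s, τ = γ − Aᵀσ. Assume σᵀρ ≠ 0 and that both skipping conditions hold: |τᵀs| ≥ c₁‖σ‖‖ρ‖ and |σᵀρ| ≥ c₁‖s‖‖τ‖. Then the adjoint TR1 update A⁺ = A + (1/(σᵀρ)) ρ τᵀ satisfies ‖y − A⁺ s‖ ≤ (c₃/c₁²) ‖s‖². -/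

import Mathlib

open scoped RealInnerProductSpace Matrix Matrix.Norms.L2Operator

/-- Multiplication of a matrix with a vector, as a map between Euclidean spaces. -/
noncomputable def matVec {m n : ℕ} (A : Matrix (Fin m) (Fin n) ℝ)
    (v : EuclideanSpace ℝ (Fin n)) : EuclideanSpace ℝ (Fin m) :=
  Matrix.toEuclideanLin A v

/-- Outer product `u vᵀ` of two Euclidean vectors, as a matrix. -/
def outer {m n : ℕ} (u : EuclideanSpace ℝ (Fin m)) (v : EuclideanSpace ℝ (Fin n)) :
    Matrix (Fin m) (Fin n) ℝ :=
  Matrix.of fun i j => u i * v j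

lemma matVec_add {m n : ℕ} (A B : Matrix (Fin m) (Fin n) ℝ) (v : EuclideanSpace ℝ (Fin n)) :
    matVec (A + B) v = matVec A v + matVec B v := by
  simp [matVec, map_add]

lemma matVec_smul {m n : ℕ} (c : ℝ) (A : Matrix (Fin m) (Fin n) ℝ) (v : EuclideanSpace ℝ (Fin n)) :
    matVec (c • A) v = c • matVec A v := by
  simp [matVec, map_smul]

lemma matVec_outer {m n : ℕ} (u : EuclideanSpace ℝ (Fin m)) (v : EuclideanSpace ℝ (Fin n))
    (x : EuclideanSpace ℝ (Fin n)) : matVec (outer u v) x = ⟪v, x⟫ • u := by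
  ext i
  simp [matVec, Matrix.toEuclideanLin_apply, Matrix.mulVec, dotProduct, outer,
    PiLp.inner_apply, RCLike.inner_apply, Finset.sum_mul, Finset.mul_sum, mul_comm, mul_assoc, mul_left_comm]

lemma inner_matVec {m n : ℕ} (A : Matrix (Fin m) (Fin n) ℝ) (σ : EuclideanSpace ℝ (Fin m))
    (s : EuclideanSpace ℝ (Fin n)) : ⟪σ, matVec A s⟫ = ⟪matVec Aᵀ σ, s⟫ := by
  simp only [matVec, Matrix.toEuclideanLin_apply, PiLp.inner_apply, RCLike.inner_apply,
    conj_trivial]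
  simp only [Matrix.mulVec,
    dotProduct, Matrix.transpose_apply, Finset.mul_sum, Finset.sum_mul]
  rw [Finset.sum_comm]
  congr 1; ext i; congr 1; ext j; ring

set_option maxHeartbeats 1000000 in
/-- one-step bound `‖y − A⁺s‖ ≤ (c₃/c₁²)‖s‖²` for the adjoint TR1 update
under the two skipping conditions.  The Jacobian of `F` is the matrix `J w`, and its
Lipschitz continuity is with respect to the L2 operator norm on matrices. -/
theorem tr1_adjoint_one_step_bound {n m : ℕ} (c₁ c₃ : ℝ) (hc₁0 : 0 < c₁) (hc₁1 : c₁ < 1)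
    (F : EuclideanSpace ℝ (Fin n) → EuclideanSpace ℝ (Fin m))
    (J : EuclideanSpace ℝ (Fin n) → Matrix (Fin m) (Fin n) ℝ)
    (hJ : ∀ w, HasFDerivAt F (LinearMap.toContinuousLinearMap (Matrix.toEuclideanLin (J w))) w)
    (hLip : ∀ w₁ w₂, ‖J w₁ - J w₂‖ ≤ c₃ * ‖w₁ - w₂‖)
    (A : Matrix (Fin m) (Fin n) ℝ) (w s : EuclideanSpace ℝ (Fin n))
    (σ : EuclideanSpace ℝ (Fin m)) (hσ : σ ≠ 0)
    (y : EuclideanSpace ℝ (Fin m)) (hy : y = F (w + s) - F w)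
    (γ : EuclideanSpace ℝ (Fin n)) (hγ : γ = matVec (J (w + s))ᵀ σ)
    (ρ : EuclideanSpace ℝ (Fin m)) (hρ : ρ = y - matVec A s)
    (τ : EuclideanSpace ℝ (Fin n)) (hτ : τ = γ - matVec Aᵀ σ)
    (hne : ⟪σ, ρ⟫ ≠ 0)
    (hskip1 : c₁ * ‖σ‖ * ‖ρ‖ ≤ |⟪τ, s⟫|)
    (hskip2 : c₁ * ‖s‖ * ‖τ‖ ≤ |⟪σ, ρ⟫|)
    (Aplus : Matrix (Fin m) (Fin n) ℝ)
    (hA : Aplus = A + (1 / ⟪σ, ρ⟫) • outer ρ τ) :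
    ‖y - matVec Aplus s‖ ≤ (c₃ / c₁ ^ 2) * ‖s‖ ^ 2 := by
  rcases eq_or_ne s 0 with hs0 | hs0
  · subst hs0 hy
    simp [matVec, sub_self]
  have hsn : 0 < ‖s‖ := norm_pos_iff.mpr hs0
  have hρ0 : ρ ≠ 0 := by rintro rfl; exact hne (inner_zero_right σ)
  have hρn : 0 < ‖ρ‖ := norm_pos_iff.mpr hρ0
  have hσn : 0 < ‖σ‖ := norm_pos_iff.mpr hσ
  have hc₃ : 0 ≤ c₃ := by
    have h := hLip w (w + s)
    have h0 : (0:ℝ) ≤ ‖J w - J (w + s)‖ := norm_nonneg _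
    have hws : ‖w - (w + s)‖ = ‖s‖ := by
      rw [sub_add_eq_sub_sub, sub_self, zero_sub, norm_neg]
    nlinarith [h0.trans h]
  -- mean value inequality
  have key : ‖F (w + s) - F w - matVec (J (w + s)) s‖ ≤ c₃ * ‖s‖ * ‖s‖ := by
    have hmv := Convex.norm_image_sub_le_of_norm_hasFDerivWithin_le'
      (f := F) (f' := fun x => LinearMap.toContinuousLinearMap (Matrix.toEuclideanLin (J x)))
      (φ := LinearMap.toContinuousLinearMap (Matrix.toEuclideanLin (J (w + s))))
      (s := segment ℝ w (w + s)) (C := c₃ * ‖s‖) (x := w) (y := w + s)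
      (fun x _ => (hJ x).hasFDerivWithinAt)
      (fun x hx => by
        have heq : ‖LinearMap.toContinuousLinearMap (Matrix.toEuclideanLin (J x)) -
            LinearMap.toContinuousLinearMap (Matrix.toEuclideanLin (J (w + s)))‖
            = ‖J x - J (w + s)‖ := by
          rw [Matrix.l2_opNorm_def, map_sub]
          rfl
        rw [heq]
        refine (hLip x (w + s)).trans ?_
        obtain ⟨a, b, ha, hb, hab, hx⟩ := hx
        have hxe : x - (w + s) = -(a • s) := by
          rw [← hx]
          have : a • w + b • (w + s) - (w + s) = (a + b) • w + b • s - w - s := by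
            simp [smul_add, add_smul]; abel
          rw [this, hab, one_smul]
          have hb1 : b = 1 - a := by linarith
          rw [hb1]; simp [sub_smul]
        rw [hxe, norm_neg, norm_smul, Real.norm_eq_abs, abs_of_nonneg ha]
        have : a * ‖s‖ ≤ 1 * ‖s‖ := by
          apply mul_le_mul_of_nonneg_right _ (norm_nonneg s); linarith
        nlinarith)
      (convex_segment _ _) (left_mem_segment ℝ w (w + s)) (right_mem_segment ℝ w (w + s))
    have hws : w + s - w = s := add_sub_cancel_left w s
    rw [hws] at hmv
    simpa [matVec] using hmv
  set d : ℝ := ⟪σ, ρ⟫ with hd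
  set t : ℝ := ⟪τ, s⟫ with ht
  -- numerator identity
  have hnum : d - t = ⟪σ, y - matVec (J (w + s)) s⟫ := by
    rw [hd, ht, hρ, hτ, hγ]
    simp only [inner_sub_left, inner_sub_right]
    rw [← inner_matVec A σ s, ← inner_matVec (J (w + s)) σ s]
    ring
  -- rewrite the update residual
  have hy' : y = ρ + matVec A s := by rw [hρ, sub_add_cancel]
  have h1 : y - matVec Aplus s = ((d - t) / d) • ρ := by
    rw [hA, matVec_add, matVec_smul, matVec_outer, hy', smul_smul]
    have hc : (d - t) / d = 1 - 1 / d * t := by field_simp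
    rw [hc, sub_smul, one_smul]
    abel
  have h2 : ‖y - matVec Aplus s‖ = |d - t| / |d| * ‖ρ‖ := by
    rw [h1, norm_smul, Real.norm_eq_abs, abs_div]
  -- bounds
  have hnumb : |d - t| ≤ ‖σ‖ * (c₃ * ‖s‖ * ‖s‖) := by
    rw [hnum]
    refine (abs_real_inner_le_norm σ _).trans ?_
    apply mul_le_mul_of_nonneg_left _ (norm_nonneg σ)
    rw [hy]
    exact key
  have hdenb : c₁ ^ 2 * (‖σ‖ * ‖ρ‖) ≤ |d| := by
    have h3 : |t| ≤ ‖τ‖ * ‖s‖ := abs_real_inner_le_norm τ s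
    have h4 : c₁ * (c₁ * ‖σ‖ * ‖ρ‖) ≤ c₁ * |t| :=
      mul_le_mul_of_nonneg_left hskip1 hc₁0.le
    have h5 : c₁ * |t| ≤ c₁ * (‖τ‖ * ‖s‖) := mul_le_mul_of_nonneg_left h3 hc₁0.le
    calc c₁ ^ 2 * (‖σ‖ * ‖ρ‖) = c₁ * (c₁ * ‖σ‖ * ‖ρ‖) := by ring
      _ ≤ c₁ * (‖τ‖ * ‖s‖) := h4.trans h5
      _ = c₁ * ‖s‖ * ‖τ‖ := by ring
      _ ≤ |d| := hskip2
  have hdpos : 0 < c₁ ^ 2 * (‖σ‖ * ‖ρ‖) := by positivity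
  rw [h2]
  calc |d - t| / |d| * ‖ρ‖
      ≤ (‖σ‖ * (c₃ * ‖s‖ * ‖s‖)) / (c₁ ^ 2 * (‖σ‖ * ‖ρ‖)) * ‖ρ‖ := by
        apply mul_le_mul_of_nonneg_right _ (norm_nonneg ρ)
        exact div_le_div₀ (by positivity) hnumb hdpos hdenb
    _ = (c₃ / c₁ ^ 2) * ‖s‖ ^ 2 := by
        field_simp
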